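/- arXiv:2604.02588 — 2 statements merged into one kernel-verified Lean document; each statement's English description precedes it below -/
import Mathlib

section
/- Let X be a separable Banach lattice and suppose the set X_{↓0} = {(z_n) ∈ X^ℕ : z_1 ≥ z_2 ≥ … ≥ 0 and inf_n z_n = 0} is a Borel subset of X^ℕ (with the product topology). Then the set {((x_n), x) ∈ X^ℕ × X : (x_n) σ-order converges to x} is an analytic subset of X^ℕ × X. -/
open MeasureTheory

/-- The set of decreasing positive sequences in `X` whose range has `0` as greatest lower
bound. -/
def XDownZero (X : Type*) [NormedAddCommGroup X] [Lattice X] [HasSolidNorm X]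
    [IsOrderedAddMonoid X] : Set (ℕ → X) :=
  {z | Antitone z ∧ (∀ n, 0 ≤ z n) ∧ IsGLB (Set.range z) 0}

/-- A sequence `(x n)` in a Banach lattice σ-order converges to `l` if there exists a decreasing
sequence `z 0 ≥ z 1 ≥ … ≥ 0` whose range has `0` as its greatest lower bound, such that for every
`m`, `|x n - l| ≤ z m` for all but finitely many `n`. -/
def SigmaOrderConvergesTo {X : Type*} [NormedAddCommGroup X] [Lattice X] [HasSolidNorm X]
    [IsOrderedAddMonoid X] (x : ℕ → X) (l : X) : Prop :=
  ∃ z : ℕ → X, Antitone z ∧ (∀ m, 0 ≤ z m) ∧ IsGLB (Set.range z) 0 ∧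
    ∀ m, ∀ᶠ n in Filter.atTop, |x n - l| ≤ z m

theorem stmt15 {X : Type*} [NormedAddCommGroup X] [Lattice X] [HasSolidNorm X]
    [IsOrderedAddMonoid X] [NormedSpace ℝ X] [CompleteSpace X]
    [PosSMulStrictMono ℝ X] [PosSMulReflectLT ℝ X] [TopologicalSpace.SeparableSpace X]
    (hBorel : MeasurableSet[borel (ℕ → X)] (XDownZero X)) :
    MeasureTheory.AnalyticSet {p : (ℕ → X) × X | SigmaOrderConvergesTo p.1 p.2} := by
  letI : MeasurableSpace X := borel X
  haveI : BorelSpace X := ⟨rfl⟩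
  letI : MeasurableSpace (ℕ → X) := borel _
  haveI : BorelSpace (ℕ → X) := ⟨rfl⟩
  letI : MeasurableSpace ((ℕ → X) × X) := borel _
  haveI : BorelSpace ((ℕ → X) × X) := ⟨rfl⟩
  letI : MeasurableSpace (((ℕ → X) × X) × (ℕ → X)) := borel _
  haveI : BorelSpace (((ℕ → X) × X) × (ℕ → X)) := ⟨rfl⟩
  set S : Set (((ℕ → X) × X) × (ℕ → X)) :=
    {p | p.2 ∈ XDownZero X ∧ ∀ m, ∀ᶠ n in Filter.atTop, |p.1.1 n - p.1.2| ≤ p.2 m} with hSdef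
  have hS : MeasurableSet S := by
    apply MeasurableSet.inter
    · exact continuous_snd.measurable hBorel
    · have : {p : ((ℕ → X) × X) × (ℕ → X) |
          ∀ m, ∀ᶠ n in Filter.atTop, |p.1.1 n - p.1.2| ≤ p.2 m} =
          ⋂ m, ⋃ N, ⋂ n, ⋂ (_ : N ≤ n), {p | |p.1.1 n - p.1.2| ≤ p.2 m} := by
        ext p
        simp [Filter.eventually_atTop]
      show MeasurableSet {p : ((ℕ → X) × X) × (ℕ → X) |
          ∀ m, ∀ᶠ n in Filter.atTop, |p.1.1 n - p.1.2| ≤ p.2 m}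
      rw [this]
      refine MeasurableSet.iInter fun m => MeasurableSet.iUnion fun N =>
        MeasurableSet.iInter fun n => MeasurableSet.iInter fun _ => ?_
      have c0 : Continuous fun p : ((ℕ → X) × X) × (ℕ → X) => p.1.1 n - p.1.2 :=
        ((continuous_apply n).comp (continuous_fst.comp continuous_fst)).sub
          (continuous_snd.comp continuous_fst)
      have c1 : Continuous fun p : ((ℕ → X) × X) × (ℕ → X) => |p.1.1 n - p.1.2| := by
        simp only [abs]
        exact c0.sup c0.neg
      have c2 : Continuous fun p : ((ℕ → X) × X) × (ℕ → X) => p.2 m :=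
        (continuous_apply m).comp continuous_snd
      exact (isClosed_le c1 c2).measurableSet
  have heq : {p : (ℕ → X) × X | SigmaOrderConvergesTo p.1 p.2} = Prod.fst '' S := by
    ext p
    constructor
    · rintro ⟨z, h1, h2, h3, h4⟩
      exact ⟨(p, z), ⟨⟨h1, h2, h3⟩, h4⟩, rfl⟩
    · rintro ⟨⟨q, z⟩, ⟨⟨h1, h2, h3⟩, h4⟩, rfl⟩
      exact ⟨z, h1, h2, h3, h4⟩
  rw [heq]
  exact hS.analyticSet.image_of_continuous continuous_fst
end

section
/- Let X be a separable Banach lattice and suppose the set {((x_n), x) ∈ X^ℕ × X : (x_n) σ-order converges to x} is an analytic subset of X^ℕ × X. Then the set X_{↓0} = {(z_n) ∈ X^ℕ : z_1 ≥ z_2 ≥ … ≥ 0 and inf_n z_n = 0} is a Borel subset of X^ℕ (with the product topology). -/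
open MeasureTheory

lemma analyticSet_inter' {α : Type*} [TopologicalSpace α] [T2Space α] {s t : Set α}
    (hs : AnalyticSet s) (ht : AnalyticSet t) : AnalyticSet (s ∩ t) := by
  rw [Set.inter_eq_iInter]
  exact AnalyticSet.iInter (by rintro (_ | _) <;> simpa)

lemma analyticSet_union' {α : Type*} [TopologicalSpace α] {s t : Set α}
    (hs : AnalyticSet s) (ht : AnalyticSet t) : AnalyticSet (s ∪ t) := by
  rw [Set.union_eq_iUnion]
  exact AnalyticSet.iUnion (by rintro (_ | _) <;> simpa)

theorem stmt16 {X : Type*} [NormedAddCommGroup X] [Lattice X] [HasSolidNorm X]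
    [IsOrderedAddMonoid X] [NormedSpace ℝ X] [CompleteSpace X]
    [PosSMulStrictMono ℝ X] [PosSMulReflectLT ℝ X] [TopologicalSpace.SeparableSpace X]
    (hAnalytic : MeasureTheory.AnalyticSet
      {p : (ℕ → X) × X | SigmaOrderConvergesTo p.1 p.2}) :
    MeasurableSet[borel (ℕ → X)] (XDownZero X) := by
  letI : MeasurableSpace (ℕ → X) := borel (ℕ → X)
  haveI : BorelSpace (ℕ → X) := ⟨rfl⟩
  letI : MeasurableSpace X := borel X
  haveI : BorelSpace X := ⟨rfl⟩
  -- The closed set of antitone nonnegative sequences.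
  set C : Set (ℕ → X) := {z | Antitone z ∧ ∀ n, 0 ≤ z n} with hC
  have hCclosed : IsClosed C := by
    have : C = (⋂ m, ⋂ n, ⋂ (_ : m ≤ n), {z : ℕ → X | z n ≤ z m}) ∩
        ⋂ n, {z : ℕ → X | 0 ≤ z n} := by
      ext z
      simp only [Set.mem_inter_iff, Set.mem_iInter, Set.mem_setOf_eq, hC]
      constructor
      · rintro ⟨h1, h2⟩; exact ⟨fun m n h => h1 h, h2⟩
      · rintro ⟨h1, h2⟩; exact ⟨fun m n h => h1 m n h, h2⟩
    rw [this]
    refine IsClosed.inter (isClosed_iInter fun m => isClosed_iInter fun n =>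
        isClosed_iInter fun _ => isClosed_le (continuous_apply n) (continuous_apply m)) ?_
    exact isClosed_iInter fun n => isClosed_le continuous_const (continuous_apply n)
  -- The set of sequences σ-order converging to 0, as a continuous preimage of an analytic set.
  have hS : AnalyticSet {z : ℕ → X | SigmaOrderConvergesTo z 0} := by
    have : {z : ℕ → X | SigmaOrderConvergesTo z 0} =
        (fun z : ℕ → X => (z, (0 : X))) ⁻¹' {p : (ℕ → X) × X | SigmaOrderConvergesTo p.1 p.2} :=
      rfl
    rw [this]
    exact hAnalytic.preimage (continuous_id.prodMk continuous_const)
  -- `XDownZero X = C ∩ {z | SigmaOrderConvergesTo z 0}`.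
  have hkey : XDownZero X = C ∩ {z : ℕ → X | SigmaOrderConvergesTo z 0} := by
    ext z
    constructor
    · rintro ⟨h1, h2, h3⟩
      refine ⟨⟨h1, h2⟩, z, h1, h2, h3, fun m => ?_⟩
      rw [Filter.eventually_atTop]
      exact ⟨m, fun n hn => by rw [sub_zero, abs_of_nonneg (h2 n)]; exact h1 hn⟩
    · rintro ⟨⟨h1, h2⟩, w, hw1, hw2, hw3, hw4⟩
      refine ⟨h1, h2, ⟨fun x hx => ?_, fun b hb => ?_⟩⟩
      · obtain ⟨n, rfl⟩ := hx; exact h2 n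
      · refine hw3.2 fun x hx => ?_
        obtain ⟨m, rfl⟩ := hx
        obtain ⟨n, hn⟩ := (hw4 m).exists
        rw [sub_zero, abs_of_nonneg (h2 n)] at hn
        exact le_trans (hb ⟨n, rfl⟩) hn
  -- The complement of `XDownZero X` is `Cᶜ` together with the projection of a Borel set.
  set B : Set ((ℕ → X) × X) := {p | (∀ n, p.2 ≤ p.1 n) ∧ ¬p.2 ≤ 0} with hB
  have hBmeas : MeasurableSet B := by
    have : B = (⋂ n, {p : (ℕ → X) × X | p.2 ≤ p.1 n}) ∩ {p : (ℕ → X) × X | p.2 ≤ 0}ᶜ := by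
      ext p; simp [hB]
    rw [this]
    refine MeasurableSet.inter (MeasurableSet.iInter fun n => ?_) ?_
    · exact (isClosed_le continuous_snd ((continuous_apply n).comp continuous_fst)).measurableSet
    · exact (isClosed_le continuous_snd continuous_const).measurableSet.compl
  have hcompl : (XDownZero X)ᶜ = Cᶜ ∪ Prod.fst '' B := by
    ext z
    simp only [Set.mem_compl_iff, Set.mem_union, Set.mem_image, Prod.exists, hB,
      Set.mem_setOf_eq]
    constructor
    · intro h
      by_cases hzC : z ∈ C
      · obtain ⟨h1, h2⟩ := hzC
        have hnotglb : ¬IsGLB (Set.range z) 0 := fun hg => h ⟨h1, h2, hg⟩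
        have hlb : (0 : X) ∈ lowerBounds (Set.range z) := by
          rintro x ⟨n, rfl⟩; exact h2 n
        by_contra hcon
        push_neg at hcon
        refine hnotglb ⟨hlb, fun b hb => ?_⟩
        by_contra hb0
        exact (hcon.2 z b ⟨fun n => hb ⟨n, rfl⟩, hb0⟩).elim rfl
      · exact Or.inl hzC
    · rintro (hzC | ⟨a, b, ⟨hb1, hb2⟩, rfl⟩)
      · exact fun hz => hzC ⟨hz.1, hz.2.1⟩
      · rintro ⟨_, _, hglb⟩
        exact hb2 (hglb.2 fun x hx => by obtain ⟨n, rfl⟩ := hx; exact hb1 n)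
  -- Conclude via Suslin's theorem.
  have hA1 : AnalyticSet (XDownZero X) := by
    rw [hkey]
    exact analyticSet_inter' hCclosed.measurableSet.analyticSet hS
  have hA2 : AnalyticSet (XDownZero X)ᶜ := by
    rw [hcompl]
    exact analyticSet_union' hCclosed.measurableSet.compl.analyticSet
      (hBmeas.analyticSet.image_of_continuous continuous_fst)
  exact hA1.measurableSet_of_compl hA2
end
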